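/- The set of nilpotent matrices in M₂(ℤ) (matrices X with X² = 0) is the disjoint union over λ ∈ ℕ of the GL₂(ℤ)-conjugacy classes of λ·E, where E = [[0,-1],[0,0]]. -/

import Mathlib

lemma form (a b c : ℤ) (h : a * a + b * c = 0) :
    ∃ (l : ℕ) (e p r u v : ℤ), (e = 1 ∨ e = -1) ∧ p * u + r * v = 1 ∧
      a = (l : ℤ) * (e * (p * r)) ∧ b = -((l : ℤ) * (e * (p * p))) ∧
      c = (l : ℤ) * (e * (r * r)) := by
  by_cases hbc : b = 0 ∧ c = 0
  · obtain ⟨hb, hc⟩ := hbc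
    have ha : a = 0 := mul_self_eq_zero.mp (by rw [hb] at h; linarith)
    exact ⟨0, 1, 1, 0, 1, 0, Or.inl rfl, by ring, by simp [ha], by simp [hb], by simp [hc]⟩
  · have hg0 : Int.gcd b c ≠ 0 := fun h0 =>
      hbc ⟨(Int.gcd_eq_zero_iff.mp h0).1, (Int.gcd_eq_zero_iff.mp h0).2⟩
    obtain ⟨g, hgdef⟩ : ∃ g : ℤ, g = (Int.gcd b c : ℤ) := ⟨_, rfl⟩
    have hgne : g ≠ 0 := by rw [hgdef]; exact_mod_cast hg0
    have hgb : g ∣ b := hgdef ▸ Int.gcd_dvd_left b c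
    have hgc : g ∣ c := hgdef ▸ Int.gcd_dvd_right b c
    obtain ⟨b0, hb0⟩ := hgb
    obtain ⟨c0, hc0⟩ := hgc
    have hcop : IsCoprime b0 c0 := by
      rw [Int.isCoprime_iff_gcd_eq_one]
      have hgpos : 0 < Int.gcd b c := Nat.pos_of_ne_zero hg0
      have h1 : b / (Int.gcd b c : ℤ) = b0 := by
        rw [← hgdef, hb0]; exact Int.mul_ediv_cancel_left _ hgne
      have h2 : c / (Int.gcd b c : ℤ) = c0 := by
        rw [← hgdef, hc0]; exact Int.mul_ediv_cancel_left _ hgne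
      rw [← h1, ← h2]
      exact Int.gcd_div_gcd_div_gcd hgpos
    have hga : g ∣ a := by
      have hd : g ^ 2 ∣ a ^ 2 := ⟨-(b0 * c0), by linear_combination h - c * hb0 - g * b0 * hc0⟩
      exact (Int.pow_dvd_pow_iff two_ne_zero).mp hd
    obtain ⟨a0, ha0⟩ := hga
    have key : a0 * a0 + b0 * c0 = 0 := by
      have h9 : g * g * (a0 * a0 + b0 * c0) = 0 := by
        linear_combination h - (a + g * a0) * ha0 - c * hb0 - g * b0 * hc0
      rcases mul_eq_zero.mp h9 with h' | h'
      · exact absurd (mul_self_eq_zero.mp h') hgne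
      · exact h'
    by_cases hb0z : b0 = 0
    · have hc0u : IsUnit c0 := isCoprime_zero_left.mp (hb0z ▸ hcop)
      have ha0z : a0 = 0 := mul_self_eq_zero.mp (by rw [hb0z] at key; linarith)
      rcases Int.isUnit_iff.mp hc0u with hc1 | hc1
      · refine ⟨Int.gcd b c, 1, 0, 1, 0, 1, Or.inl rfl, by ring, ?_, ?_, ?_⟩ <;>
          rw [← hgdef] <;>
          [linear_combination ha0 + g * ha0z; linear_combination hb0 + g * hb0z;
           linear_combination hc0 + g * hc1]
      · refine ⟨Int.gcd b c, -1, 0, 1, 0, 1, Or.inr rfl, by ring, ?_, ?_, ?_⟩ <;>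
          rw [← hgdef] <;>
          [linear_combination ha0 + g * ha0z; linear_combination hb0 + g * hb0z;
           linear_combination hc0 + g * hc1]
    · have hsq : b0 * (-c0) = a0 ^ 2 := by linear_combination -key
      obtain ⟨p, hp⟩ := Int.sq_of_isCoprime hcop.neg_right hsq
      have hpz : p ≠ 0 := by
        rintro rfl
        rcases hp with hp | hp <;> simp at hp <;> exact hb0z hp
      have hpa : p ∣ a0 := by
        apply (Int.pow_dvd_pow_iff two_ne_zero).mp
        rcases hp with hp | hp
        · exact ⟨-c0, by linear_combination -hsq - c0 * hp⟩
        · exact ⟨c0, by linear_combination -hsq - c0 * hp⟩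
      obtain ⟨a1, ha1⟩ := hpa
      rcases hp with hp | hp
      · -- b0 = p^2, e = -1, c0 = -a1^2, r = -a1
        have hc0e : c0 = -(a1 * a1) := by
          have h2 : p ^ 2 * c0 = p ^ 2 * (-(a1 * a1)) := by
            linear_combination (-c0) * hp + key - (a0 + p * a1) * ha1
          exact mul_left_cancel₀ (pow_ne_zero 2 hpz) h2
        have hcop2 : IsCoprime p (-a1) := by
          have h3 : IsCoprime (p ^ 2) ((-a1) ^ 2) := by
            have h4 : IsCoprime b0 (-c0) := hcop.neg_right
            rw [hp, hc0e] at h4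
            convert h4 using 1; ring
          exact (IsCoprime.pow_left_iff two_pos).mp ((IsCoprime.pow_right_iff two_pos).mp h3)
        obtain ⟨u, v, huv⟩ := hcop2
        refine ⟨Int.gcd b c, -1, p, -a1, u, v, Or.inr rfl, by linarith [huv], ?_, ?_, ?_⟩ <;>
          rw [← hgdef] <;>
          [linear_combination ha0 + g * ha1; linear_combination hb0 + g * hp;
           linear_combination hc0 + g * hc0e]
      · -- b0 = -p^2, e = 1, c0 = a1^2, r = a1
        have hc0e : c0 = a1 * a1 := by
          have h2 : p ^ 2 * c0 = p ^ 2 * (a1 * a1) := by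
            linear_combination c0 * hp - key + (a0 + p * a1) * ha1
          exact mul_left_cancel₀ (pow_ne_zero 2 hpz) h2
        have hcop2 : IsCoprime p a1 := by
          have h3 : IsCoprime (p ^ 2) (a1 ^ 2) := by
            have h4 : IsCoprime (-b0) c0 := hcop.neg_left
            rw [hp, hc0e] at h4
            convert h4 using 1 <;> ring
          exact (IsCoprime.pow_left_iff two_pos).mp ((IsCoprime.pow_right_iff two_pos).mp h3)
        obtain ⟨u, v, huv⟩ := hcop2
        refine ⟨Int.gcd b c, 1, p, a1, u, v, Or.inl rfl, by linarith [huv], ?_, ?_, ?_⟩ <;>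
          rw [← hgdef] <;>
          [linear_combination ha0 + g * ha1; linear_combination hb0 + g * hp;
           linear_combination hc0 + g * hc0e]

lemma class_dvd (l : ℕ) (T : GL (Fin 2) ℤ) (X : Matrix (Fin 2) (Fin 2) ℤ)
    (hX : X = (T : Matrix (Fin 2) (Fin 2) ℤ) * ((l : ℤ) • !![0, -1; 0, 0]) *
      ((T⁻¹ : GL (Fin 2) ℤ) : Matrix (Fin 2) (Fin 2) ℤ)) :
    ((l : ℤ) ∣ X 0 1) ∧ ((l : ℤ) ∣ X 1 0) ∧
      ∀ m : ℤ, m ∣ X 0 1 → m ∣ X 1 0 → m ∣ (l : ℤ) := by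
  set A : Matrix (Fin 2) (Fin 2) ℤ := (T : Matrix (Fin 2) (Fin 2) ℤ) with hA
  have hD : ((T⁻¹ : GL (Fin 2) ℤ) : Matrix (Fin 2) (Fin 2) ℤ) =
      Ring.inverse A.det • A.adjugate := by
    rw [Matrix.coe_units_inv, Matrix.inv_def]
  have hdu : IsUnit A.det := (Matrix.isUnit_iff_isUnit_det A).mp T.isUnit
  set e : ℤ := Ring.inverse A.det with hedef
  have hed : e * A.det = 1 := Ring.inverse_mul_cancel _ hdu
  have he2 : e * e = 1 := by
    rcases Int.isUnit_iff.mp hdu with h | h <;> rw [h] at hed <;> nlinarith [hed]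
  -- entry formulas
  have hX01 : X 0 1 = -((l : ℤ) * (e * (A 0 0 * A 0 0))) := by
    rw [hX, hD]
    simp [Matrix.mul_apply, Fin.sum_univ_two, Matrix.adjugate_fin_two, Matrix.smul_apply]
    ring
  have hX10 : X 1 0 = (l : ℤ) * (e * (A 1 0 * A 1 0)) := by
    rw [hX, hD]
    simp [Matrix.mul_apply, Fin.sum_univ_two, Matrix.adjugate_fin_two, Matrix.smul_apply]
    ring
  have hcop : IsCoprime (A 0 0) (A 1 0) := by
    refine ⟨e * A 1 1, -(e * A 0 1), ?_⟩
    rw [Matrix.det_fin_two] at hed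
    linear_combination hed
  obtain ⟨α, β, hαβ⟩ := hcop.pow (m := 2) (n := 2)
  refine ⟨⟨-(e * (A 0 0 * A 0 0)), by linear_combination hX01⟩,
    ⟨e * (A 1 0 * A 1 0), by linear_combination hX10⟩, ?_⟩
  intro m h1 h2
  have : (l : ℤ) = (-(α * e)) * X 0 1 + (β * e) * X 1 0 := by
    rw [hX01, hX10]
    linear_combination (-(l:ℤ) * e * e) * hαβ + (-(l:ℤ)) * he2
  rw [this]
  exact dvd_add (Dvd.dvd.mul_left h1 _) (Dvd.dvd.mul_left h2 _)

lemma build (l : ℕ) (e p r u v a b c : ℤ) (he : e = 1 ∨ e = -1)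
    (huv : p * u + r * v = 1)
    (ha : a = (l : ℤ) * (e * (p * r))) (hb : b = -((l : ℤ) * (e * (p * p))))
    (hc : c = (l : ℤ) * (e * (r * r))) :
    ∃ T : GL (Fin 2) ℤ, !![a, b; c, -a] =
      (T : Matrix (Fin 2) (Fin 2) ℤ) * ((l : ℤ) • !![0, -1; 0, 0]) *
      ((T⁻¹ : GL (Fin 2) ℤ) : Matrix (Fin 2) (Fin 2) ℤ) := by
  rcases he with rfl | rfl
  · refine ⟨⟨!![p, -v; r, u], !![u, v; -r, p], ?_, ?_⟩, ?_⟩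
    · ext i j
      fin_cases i <;> fin_cases j <;>
        simp [Matrix.mul_apply, Fin.sum_univ_two, Matrix.one_apply] <;> linarith [huv]
    · ext i j
      fin_cases i <;> fin_cases j <;>
        simp [Matrix.mul_apply, Fin.sum_univ_two, Matrix.one_apply] <;> linarith [huv]
    · ext i j
      fin_cases i <;> fin_cases j <;>
        simp [Matrix.mul_apply, Fin.sum_univ_two, Matrix.smul_apply] <;>
        [linear_combination ha; linear_combination hb; linear_combination hc;
         linear_combination ha]
  · refine ⟨⟨!![p, v; r, -u], !![u, v; r, -p], ?_, ?_⟩, ?_⟩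
    · ext i j
      fin_cases i <;> fin_cases j <;>
        simp [Matrix.mul_apply, Fin.sum_univ_two, Matrix.one_apply] <;> linarith [huv]
    · ext i j
      fin_cases i <;> fin_cases j <;>
        simp [Matrix.mul_apply, Fin.sum_univ_two, Matrix.one_apply] <;> linarith [huv]
    · ext i j
      fin_cases i <;> fin_cases j <;>
        simp [Matrix.mul_apply, Fin.sum_univ_two, Matrix.smul_apply] <;>
        [linear_combination ha; linear_combination hb; linear_combination hc;
         linear_combination -ha]

theorem stmt_8 :
    ({X : Matrix (Fin 2) (Fin 2) ℤ | X * X = 0} =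
      ⋃ lam : ℕ,
        {X : Matrix (Fin 2) (Fin 2) ℤ | ∃ T : GL (Fin 2) ℤ,
          X = (T : Matrix (Fin 2) (Fin 2) ℤ) * ((lam : ℤ) • !![0, -1; 0, 0]) *
              ((T⁻¹ : GL (Fin 2) ℤ) : Matrix (Fin 2) (Fin 2) ℤ)}) ∧
    ∀ lam mu : ℕ, lam ≠ mu →
      Disjoint
        {X : Matrix (Fin 2) (Fin 2) ℤ | ∃ T : GL (Fin 2) ℤ,
          X = (T : Matrix (Fin 2) (Fin 2) ℤ) * ((lam : ℤ) • !![0, -1; 0, 0]) *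
              ((T⁻¹ : GL (Fin 2) ℤ) : Matrix (Fin 2) (Fin 2) ℤ)}
        {X : Matrix (Fin 2) (Fin 2) ℤ | ∃ T : GL (Fin 2) ℤ,
          X = (T : Matrix (Fin 2) (Fin 2) ℤ) * ((mu : ℤ) • !![0, -1; 0, 0]) *
              ((T⁻¹ : GL (Fin 2) ℤ) : Matrix (Fin 2) (Fin 2) ℤ)} := by
  constructor
  · ext X
    simp only [Set.mem_setOf_eq, Set.mem_iUnion]
    constructor
    · intro hXX
      have e00 : X 0 0 * X 0 0 + X 0 1 * X 1 0 = 0 := by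
        have := congrFun (congrFun hXX 0) 0
        simpa [Matrix.mul_apply, Fin.sum_univ_two] using this
      have e01 : X 0 0 * X 0 1 + X 0 1 * X 1 1 = 0 := by
        have := congrFun (congrFun hXX 0) 1
        simpa [Matrix.mul_apply, Fin.sum_univ_two] using this
      have e10 : X 1 0 * X 0 0 + X 1 1 * X 1 0 = 0 := by
        have := congrFun (congrFun hXX 1) 0
        simpa [Matrix.mul_apply, Fin.sum_univ_two] using this
      have e11 : X 1 0 * X 0 1 + X 1 1 * X 1 1 = 0 := by
        have := congrFun (congrFun hXX 1) 1
        simpa [Matrix.mul_apply, Fin.sum_univ_two] using this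
      have hd : X 1 1 = -(X 0 0) := by
        rcases mul_eq_zero.mp (show (X 0 0 + X 1 1) * X 0 1 = 0 by linear_combination e01) with
          h' | h'
        · linarith
        · rcases mul_eq_zero.mp
            (show (X 0 0 + X 1 1) * X 1 0 = 0 by linear_combination e10) with h'' | h''
          · linarith
          · have ha : X 0 0 = 0 := mul_self_eq_zero.mp (by rw [h''] at e00; linarith)
            have hdd : X 1 1 = 0 := mul_self_eq_zero.mp (by rw [h'] at e11; linarith)
            rw [ha, hdd]; ring
      obtain ⟨l, e, p, r, u, v, he, huv, ha, hb, hc⟩ := form (X 0 0) (X 0 1) (X 1 0) e00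
      have hXe : X = !![X 0 0, X 0 1; X 1 0, -(X 0 0)] := by
        rw [← hd]; exact Matrix.eta_fin_two X
      refine ⟨l, ?_⟩
      rw [hXe]
      exact build l e p r u v _ _ _ he huv ha hb hc
    · rintro ⟨l, T, rfl⟩
      set M : Matrix (Fin 2) (Fin 2) ℤ := (l : ℤ) • !![0, -1; 0, 0] with hM
      have hMM : M * M = 0 := by
        have hE : (!![0, -1; 0, 0] : Matrix (Fin 2) (Fin 2) ℤ) * !![0, -1; 0, 0] = 0 := by
          ext i j
          fin_cases i <;> fin_cases j <;> simp [Matrix.mul_apply, Fin.sum_univ_two]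
        rw [hM, Matrix.smul_mul, Matrix.mul_smul, hE]
        simp
      have h1 : ((T⁻¹ : GL (Fin 2) ℤ) : Matrix (Fin 2) (Fin 2) ℤ) *
          (T : Matrix (Fin 2) (Fin 2) ℤ) = 1 := T.inv_mul
      calc (T : Matrix (Fin 2) (Fin 2) ℤ) * M * ((T⁻¹ : GL (Fin 2) ℤ) : Matrix (Fin 2) (Fin 2) ℤ) *
            ((T : Matrix (Fin 2) (Fin 2) ℤ) * M * ((T⁻¹ : GL (Fin 2) ℤ) : Matrix (Fin 2) (Fin 2) ℤ))
          = (T : Matrix (Fin 2) (Fin 2) ℤ) * M *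
            ((((T⁻¹ : GL (Fin 2) ℤ) : Matrix (Fin 2) (Fin 2) ℤ) * (T : Matrix (Fin 2) (Fin 2) ℤ)) *
              (M * ((T⁻¹ : GL (Fin 2) ℤ) : Matrix (Fin 2) (Fin 2) ℤ))) := by
            simp only [Matrix.mul_assoc]
        _ = (T : Matrix (Fin 2) (Fin 2) ℤ) * (M * M) * ((T⁻¹ : GL (Fin 2) ℤ) : Matrix (Fin 2) (Fin 2) ℤ) := by
            rw [h1, one_mul]; simp only [Matrix.mul_assoc]
        _ = 0 := by rw [hMM, Matrix.mul_zero, Matrix.zero_mul]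
  · intro lam mu hne
    rw [Set.disjoint_left]
    rintro X ⟨T, hT⟩ ⟨S, hS⟩
    obtain ⟨hl1, hl2, hl3⟩ := class_dvd lam T X hT
    obtain ⟨hm1, hm2, hm3⟩ := class_dvd mu S X hS
    have h1 : (lam : ℤ) ∣ (mu : ℤ) := hm3 _ hl1 hl2
    have h2 : (mu : ℤ) ∣ (lam : ℤ) := hl3 _ hm1 hm2
    exact hne (by exact_mod_cast Int.dvd_antisymm (by positivity) (by positivity) h1 h2)
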